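/- The universal Novikov field Λ over a field k, consisting of formal sums Σ c_{a_i} T^{a_i} with real exponents a_i → ∞ and coefficients c_{a_i} ∈ k, is a field: every nonzero element has a multiplicative inverse. -/

import Mathlib

open Pointwise


/-- An element of the Hahn series field `HahnSeries ℝ k` lies in the universal Novikov
field over `k` when its support (the set of exponents `a_i` of `T` with nonzero
coefficient) tends to `+∞`, i.e. has only finitely many elements below any bound. -/
def IsNovikov {k : Type*} [Field k] (f : HahnSeries ℝ k) : Prop :=
  ∀ b : ℝ, {r : ℝ | r ∈ f.support ∧ r ≤ b}.Finite

/-- A set of reals is "Novikov" if it has finitely many elements below any bound. -/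
def NovSet (S : Set ℝ) : Prop := ∀ b : ℝ, {r : ℝ | r ∈ S ∧ r ≤ b}.Finite

lemma novSet_mono {S T : Set ℝ} (h : S ⊆ T) (hT : NovSet T) : NovSet S := fun b =>
  (hT b).subset fun r hr => ⟨h hr.1, hr.2⟩

lemma novSet_singleton (a : ℝ) : NovSet {a} := fun b =>
  (Set.finite_singleton a).subset fun r hr => hr.1

lemma novSet_union {S T : Set ℝ} (hS : NovSet S) (hT : NovSet T) : NovSet (S ∪ T) := by
  intro b
  have : {r : ℝ | r ∈ S ∪ T ∧ r ≤ b} ⊆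
      {r : ℝ | r ∈ S ∧ r ≤ b} ∪ {r : ℝ | r ∈ T ∧ r ≤ b} := by
    rintro r ⟨hr | hr, hb⟩
    · exact Or.inl ⟨hr, hb⟩
    · exact Or.inr ⟨hr, hb⟩
  exact ((hS b).union (hT b)).subset this

lemma novSet_bddBelow {S : Set ℝ} (hS : NovSet S) : ∃ m : ℝ, ∀ x ∈ S, m ≤ x := by
  obtain ⟨m, hm⟩ := (hS 0).bddBelow
  refine ⟨min m 0, fun x hx => ?_⟩
  rcases le_or_gt x 0 with h | h
  · exact le_trans (min_le_left _ _) (hm ⟨hx, h⟩)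
  · exact le_trans (min_le_right _ _) h.le

lemma novSet_add {S T : Set ℝ} (hS : NovSet S) (hT : NovSet T) : NovSet (S + T) := by
  obtain ⟨mS, hmS⟩ := novSet_bddBelow hS
  obtain ⟨mT, hmT⟩ := novSet_bddBelow hT
  intro b
  have : {r : ℝ | r ∈ S + T ∧ r ≤ b} ⊆
      Set.image2 (· + ·) {r : ℝ | r ∈ S ∧ r ≤ b - mT} {r : ℝ | r ∈ T ∧ r ≤ b - mS} := by
    rintro r ⟨hr, hb⟩
    obtain ⟨s, hs, t, ht, rfl⟩ := Set.mem_add.mp hr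
    exact ⟨s, ⟨hs, by linarith [hmT t ht]⟩, t, ⟨ht, by linarith [hmS s hs]⟩, rfl⟩
  exact (Set.Finite.image2 _ (hS _) (hT _)).subset this

lemma novSet_closure {S : Set ℝ} (hS : NovSet S) (hpos : ∀ x ∈ S, 0 < x) :
    NovSet (AddSubmonoid.closure S : Set ℝ) := by
  intro b
  -- the elements of `S` below `b` form a finite set `F` with a positive lower bound `δ`
  set F : Set ℝ := {r : ℝ | r ∈ S ∧ r ≤ b} with hF
  have hFfin : F.Finite := hS b
  obtain ⟨δ, hδ0, hδF⟩ : ∃ δ : ℝ, 0 < δ ∧ ∀ x ∈ F, δ ≤ x := by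
    rcases F.eq_empty_or_nonempty with h | h
    · exact ⟨1, one_pos, fun x hx => absurd (h ▸ hx) (Set.notMem_empty x)⟩
    · obtain ⟨δ, hδF, hδmin⟩ := Set.Finite.exists_minimalFor id F hFfin h
      exact ⟨δ, hpos δ hδF.1, fun x hx => le_of_not_gt fun hlt =>
        (not_le_of_gt hlt) (hδmin hx hlt.le)⟩
  -- iterated sumsets of `F`
  set A : ℕ → Set ℝ := fun n => Nat.rec ({0} : Set ℝ) (fun _ An => An ∪ (An + F)) n with hA
  have hAfin : ∀ n, (A n).Finite := by
    intro n
    induction n with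
    | zero => exact Set.finite_singleton 0
    | succ n ih => exact ih.union (ih.add hFfin)
  have hAzero : ∀ n, (0 : ℝ) ∈ A n := by
    intro n
    induction n with
    | zero => exact rfl
    | succ n ih => exact Or.inl ih
  have hAmono : ∀ n, A n ⊆ A (n + 1) := fun n => Set.subset_union_left
  -- any sum of at most `n` elements of `S` which is `≤ b` lies in `A n`
  have key : ∀ n (l : Multiset ℝ), (∀ y ∈ l, y ∈ S) → l.sum ≤ b →
      Multiset.card l ≤ n → l.sum ∈ A n := by
    intro n
    induction n with
    | zero =>
      intro l _ _ hcard
      rw [Nat.le_zero, Multiset.card_eq_zero] at hcard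
      subst hcard
      simpa using hAzero 0
    | succ n ih =>
      intro l hl hsum hcard
      rcases l.empty_or_exists_mem with h | ⟨a, ha⟩
      · subst h; simpa using hAzero (n + 1)
      · obtain ⟨t, rfl⟩ := Multiset.exists_cons_of_mem ha
        have hnn : ∀ y ∈ t, (0 : ℝ) ≤ y := fun y hy =>
          (hpos y (hl y (Multiset.mem_cons_of_mem hy))).le
        have htsum : (0 : ℝ) ≤ t.sum := Multiset.sum_nonneg hnn
        have ha0 : (0 : ℝ) < a := hpos a (hl a (Multiset.mem_cons_self a t))
        rw [Multiset.sum_cons] at hsum ⊢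
        have haF : a ∈ F := ⟨hl a (Multiset.mem_cons_self a t), by linarith⟩
        have ht : t.sum ∈ A n := by
          refine ih t (fun y hy => hl y (Multiset.mem_cons_of_mem hy)) (by linarith) ?_
          have := hcard
          rw [Multiset.card_cons] at this
          omega
        have : a + t.sum = t.sum + a := add_comm _ _
        rw [this]
        exact Or.inr (Set.add_mem_add ht haF)
  -- conclude
  set N : ℕ := ⌈b / δ⌉₊ with hN
  refine ((hAfin N).subset ?_)
  rintro r ⟨hr, hb⟩
  obtain ⟨l, hl, rfl⟩ := AddSubmonoid.exists_multiset_of_mem_closure hr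
  refine key N l hl hb ?_
  -- bound on the number of summands
  have hmem : ∀ y ∈ l, δ ≤ y := by
    intro y hy
    have hynn : ∀ x ∈ l, (0 : ℝ) ≤ x := fun x hx => (hpos x (hl x hx)).le
    have hyle : y ≤ l.sum := Multiset.single_le_sum hynn y hy
    exact hδF y ⟨hl y hy, le_trans hyle hb⟩
  have hcard : (Multiset.card l : ℝ) * δ ≤ l.sum := by
    have := Multiset.card_nsmul_le_sum hmem
    simpa [nsmul_eq_mul] using this
  have : (Multiset.card l : ℝ) ≤ b / δ := by
    rw [le_div_iff₀ hδ0]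
    linarith
  exact_mod_cast this.trans (Nat.le_ceil _)

lemma novSet_support_sub {k : Type*} [Field k] (x y : HahnSeries ℝ k)
    (hx : NovSet x.support) (hy : NovSet y.support) : NovSet (x - y).support := by
  refine novSet_mono ?_ (novSet_union hx hy)
  intro r hr
  rw [HahnSeries.mem_support, HahnSeries.coeff_sub] at hr
  by_cases h : x.coeff r = 0
  · exact Or.inr (by simpa [h] using hr)
  · exact Or.inl h

/-- The universal Novikov field `Λ` over a field `k`, consisting of formal
sums `Σ c_{a_i} T^{a_i}` with real exponents `a_i → ∞` and coefficients in `k`, is a field: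
every nonzero element has a multiplicative inverse (again lying in `Λ`). -/
theorem novikov_is_field (k : Type*) [Field k] (f : HahnSeries ℝ k)
    (hf : IsNovikov f) (h0 : f ≠ 0) :
    ∃ g : HahnSeries ℝ k, IsNovikov g ∧ f * g = 1 ∧ g * f = 1 := by
  classical
  have hc : f.leadingCoeff ≠ 0 := HahnSeries.leadingCoeff_ne_zero.mpr h0
  set s : HahnSeries ℝ k := HahnSeries.single (-f.order) (f.leadingCoeff)⁻¹ with hs
  set y : HahnSeries ℝ k := 1 - s * f with hydef
  have hy : 0 < y.orderTop := HahnSeries.unit_aux f (inv_mul_cancel₀ hc) _ (neg_add_cancel f.order)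
  set h : HahnSeries ℝ k := (HahnSeries.SummableFamily.powers y).hsum with hh
  refine ⟨s * h, ?_, ?_, ?_⟩
  · -- the inverse is Novikov
    -- support of y is Novikov and positive
    have hsupp_s : NovSet s.support :=
      novSet_mono HahnSeries.support_single_subset (novSet_singleton _)
    have hsupp_sf : NovSet (s * f).support := by
      refine novSet_mono (HahnSeries.support_mul_subset) ?_
      exact novSet_add hsupp_s hf
    have hsupp_y : NovSet y.support := by
      refine novSet_support_sub 1 (s * f) ?_ hsupp_sf
      exact novSet_mono (by rw [HahnSeries.support_one]) (novSet_singleton 0)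
    have hypos : ∀ x ∈ y.support, (0 : ℝ) < x := by
      intro x hx
      have := HahnSeries.orderTop_le_of_coeff_ne_zero hx
      have h2 : (0 : WithTop ℝ) < (x : WithTop ℝ) := lt_of_lt_of_le hy this
      exact_mod_cast h2
    -- support of powers lies in the closure
    have hpow : ∀ n : ℕ, (y ^ n).support ⊆ (AddSubmonoid.closure y.support : Set ℝ) := by
      intro n
      induction n with
      | zero =>
        intro r hr
        rw [pow_zero, HahnSeries.support_one, Set.mem_singleton_iff] at hr
        rw [hr]
        exact AddSubmonoid.zero_mem _
      | succ n ih =>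
        intro r hr
        rw [pow_succ] at hr
        obtain ⟨i, hi, j, hj, rfl⟩ := HahnSeries.support_mul_subset hr
        exact AddSubmonoid.add_mem _ (ih hi) (AddSubmonoid.subset_closure hj)
    have hsupp_h : h.support ⊆ (AddSubmonoid.closure y.support : Set ℝ) := by
      refine (HahnSeries.SummableFamily.support_hsum_subset).trans ?_
      refine Set.iUnion_subset fun n => ?_
      rw [HahnSeries.SummableFamily.coe_powers hy]
      exact hpow n
    have hnov_h : NovSet h.support :=
      novSet_mono hsupp_h (novSet_closure hsupp_y hypos)
    intro b
    exact (novSet_mono (HahnSeries.support_mul_subset)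
      (novSet_add hsupp_s hnov_h)) b
  · -- f * (s * h) = 1
    have h1 : (1 - y) * h = 1 := HahnSeries.SummableFamily.one_sub_self_mul_hsum_powers hy
    rw [hydef, sub_sub_cancel] at h1
    calc f * (s * h) = s * f * h := by ring
    _ = 1 := h1
  · have h1 : (1 - y) * h = 1 := HahnSeries.SummableFamily.one_sub_self_mul_hsum_powers hy
    rw [hydef, sub_sub_cancel] at h1
    calc s * h * f = s * f * h := by ring
    _ = 1 := h1
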